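/- arXiv:1803.01571 — 18 statements merged into one kernel-verified Lean document; each statement's English description precedes it below -/
import Mathlib

section
/- Let T be a knowledge base, φ a sentence, and C_φ a cutting for T and φ; define the explanatory relation ▷ from C_φ. If φ ▷ ψ, then Mod(T ∪ {ψ}) \ Triv ≠ ∅ and Mod(T ∪ {ψ}) \ Triv ⊆ Min(Mod(T ∪ {φ}) \ Triv, ⪯_{C_φ}), i.e. every nontrivial model of T ∪ {ψ} is a ⪯_{C_φ}-minimal element of the nontrivial models of T ∪ {φ}. -/
variable {Sen M : Type*}

/-- The class of models of a set of sentences in a satisfaction system. -/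
def ModS (sat : M → Sen → Prop) (T : Set Sen) : Set M := {m | ∀ φ ∈ T, sat m φ}

/-- The trivial models: those satisfying every sentence. -/
def TrivS (sat : M → Sen → Prop) : Set M := {m | ∀ φ : Sen, sat m φ}

/-- A cutting for a knowledge base `T` and a sentence `φ`. -/
structure IsCutting (sat : M → Sen → Prop) (T : Set Sen) (φ : Sen) (C : Set (Set M)) : Prop where
  subset_mod : ∀ A ∈ C, A ⊆ ModS sat (T ∪ {φ})
  triv_lt : ∀ A ∈ C, TrivS sat ⊂ A
  union_closed : ∀ S ⊆ C, S.Nonempty → ⋃₀ S ∈ C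
  top_mem : ModS sat (T ∪ {φ}) ∈ C
  wf : C.WellFoundedOn (fun A B => A ⊂ B)

/-- The set of ⊆-minimal elements of a family of sets. -/
def MinCut (C : Set (Set M)) : Set (Set M) := {A ∈ C | ∀ B ∈ C, ¬ B ⊂ A}

/-- The explanatory relation based on a cutting `C` (for the observation whose cutting is `C`):
`ψ` is an explanation iff `Mod(T ∪ {ψ}) ≠ Triv` and `Mod(T ∪ {ψ})` is contained in some
minimal element of `C`. -/
def ExplRel (sat : M → Sen → Prop) (T : Set Sen) (C : Set (Set M)) (ψ : Sen) : Prop :=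
  ModS sat (T ∪ {ψ}) ≠ TrivS sat ∧ ∃ A ∈ MinCut C, ModS sat (T ∪ {ψ}) ⊆ A

/-- `c` is a maximal chain (for ⊆) among the subsets of `Cφ`. -/
def IsMaxChainIn (Cφ c : Set (Set M)) : Prop :=
  c ⊆ Cφ ∧ IsChain (· ⊆ ·) c ∧
    ∀ c' : Set (Set M), c' ⊆ Cφ → IsChain (· ⊆ ·) c' → c ⊆ c' → c' = c

/-- The relation `⪯_{Cφ}` on models derived from a cutting `Cφ`. -/
def CutPre (Cφ : Set (Set M)) (m m' : M) : Prop :=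
  ∃ c : Set (Set M), IsMaxChainIn Cφ c ∧ ∀ A ∈ c, m' ∈ A → m ∈ A

/-- The ⪯-minimal elements of a set of models. -/
def MinModels (r : M → M → Prop) (X : Set M) : Set M :=
  {m ∈ X | ∀ m' ∈ X, ¬ (r m' m ∧ ¬ r m m')}

lemma exists_maxChainIn_mem {Cφ : Set (Set M)} {A : Set M} (hA : A ∈ Cφ) :
    ∃ c, IsMaxChainIn Cφ c ∧ A ∈ c := by
  obtain ⟨t, ht, hsub⟩ :=
    (IsChain.singleton (r := fun x y : ↥Cφ => (x : Set M) ⊆ y) (a := ⟨A, hA⟩)).exists_maxChain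
  refine ⟨Subtype.val '' t, ⟨?_, ?_, ?_⟩, ⟨⟨A, hA⟩, hsub rfl, rfl⟩⟩
  · rintro _ ⟨x, _, rfl⟩; exact x.2
  · exact ht.1.image_of_map_rel _ _ Subtype.val (fun _ _ h => h)
  · intro c' hc'sub hc'chain hle
    apply Set.Subset.antisymm _ hle
    have ht' : t = {x : ↥Cφ | (x : Set M) ∈ c'} := by
      refine ht.2 ?_ (fun x hx => hle ⟨x, hx, rfl⟩)
      intro x hx y hy hxy
      exact hc'chain hx hy (fun e => hxy (Subtype.ext e))
    intro B hB
    exact ⟨⟨B, hc'sub hB⟩, by rw [ht']; exact hB, rfl⟩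

theorem stmt_1 (sat : M → Sen → Prop) (T : Set Sen) (hT : T.Finite) (φ ψ : Sen)
    (Cφ : Set (Set M)) (hC : IsCutting sat T φ Cφ)
    (h : ExplRel sat T Cφ ψ) :
    (ModS sat (T ∪ {ψ}) \ TrivS sat).Nonempty ∧
      ModS sat (T ∪ {ψ}) \ TrivS sat ⊆
        MinModels (CutPre Cφ) (ModS sat (T ∪ {φ}) \ TrivS sat) := by
  obtain ⟨hne, A, ⟨hAC, hAmin⟩, hψA⟩ := h
  have htriv : TrivS sat ⊆ ModS sat (T ∪ {ψ}) := fun m hm φ' _ => hm φ'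
  constructor
  · rcases Set.eq_empty_or_nonempty (ModS sat (T ∪ {ψ}) \ TrivS sat) with he | hne'
    · exact absurd (Set.Subset.antisymm (Set.diff_eq_empty.mp he) htriv) hne
    · exact hne'
  · rintro m ⟨hmψ, hmnt⟩
    have hmA : m ∈ A := hψA hmψ
    -- a maximal chain through A
    obtain ⟨c, hc, hAc⟩ := exists_maxChainIn_mem hAC
    -- every member of the chain contains m
    have key : ∀ B ∈ c, m ∈ B := by
      intro B hB
      rcases hc.2.1.total hAc hB with hAB | hBA
      · exact hAB hmA
      · rcases eq_or_ne B A with rfl | hne'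
        · exact hmA
        · exact absurd ⟨hBA, fun hAB => hne' (Set.Subset.antisymm hBA hAB)⟩
            (hAmin B (hc.1 hB))
    have hmle : ∀ m' : M, CutPre Cφ m m' := fun m' =>
      ⟨c, hc, fun B hB _ => key B hB⟩
    refine ⟨⟨hC.subset_mod A hAC hmA, hmnt⟩, ?_⟩
    intro m' _ ⟨_, hnot⟩
    exact hnot (hmle m')
end

section
/- Let T be a knowledge base, φ, φ', ψ, ψ' sentences, and C a cutting for T and φ. If Mod(T ∪ {φ}) = Mod(T ∪ {φ'}), then C is also a cutting for T and φ'; and if moreover Mod(T ∪ {ψ}) = Mod(T ∪ {ψ'}) and φ ▷ ψ with respect to C, then φ' ▷ ψ' with respect to C. (Left and right logical equivalence of the explanatory relation based on cuttings.) -/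
variable {Sen M : Type*}

theorem stmt_2 (sat : M → Sen → Prop) (T : Set Sen) (hT : T.Finite)
    (φ φ' ψ ψ' : Sen) (C : Set (Set M)) (hC : IsCutting sat T φ C)
    (hφ : ModS sat (T ∪ {φ}) = ModS sat (T ∪ {φ'})) :
    IsCutting sat T φ' C ∧
      (ModS sat (T ∪ {ψ}) = ModS sat (T ∪ {ψ'}) →
        ExplRel sat T C ψ → ExplRel sat T C ψ') := by
  refine ⟨⟨hφ ▸ hC.subset_mod, hC.triv_lt, hC.union_closed, hφ ▸ hC.top_mem, hC.wf⟩,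
    fun hψ h => ⟨hψ ▸ h.1, hψ ▸ h.2⟩⟩
end

section
/- Let T be a knowledge base, C_φ a cutting for T and φ, and ▷ the explanatory relation based on C_φ. If φ ▷ ψ, T ∪ {ψ'} ⊨ ψ (i.e. Mod(T ∪ {ψ'}) ⊆ Mod(ψ)) and Mod(T ∪ {ψ'}) ≠ Triv, then φ ▷ ψ'. (Right strengthening RS.) -/
variable {Sen M : Type*}

theorem stmt_3 (sat : M → Sen → Prop) (T : Set Sen) (hT : T.Finite)
    (φ ψ ψ' : Sen) (Cφ : Set (Set M)) (hC : IsCutting sat T φ Cφ)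
    (h1 : ExplRel sat T Cφ ψ)
    (h2 : ModS sat (T ∪ {ψ'}) ⊆ ModS sat {ψ})
    (h3 : ModS sat (T ∪ {ψ'}) ≠ TrivS sat) :
    ExplRel sat T Cφ ψ' := by
  obtain ⟨-, A, hA, hsub⟩ := h1
  refine ⟨h3, A, hA, fun m hm => hsub fun χ hχ => ?_⟩
  rcases hχ with hχ | hχ
  · exact hm χ (Or.inl hχ)
  · rcases hχ with rfl
    exact h2 hm χ rfl
end

section
/- Let T be a knowledge base and φ, ψ sentences. Then ψ ∈ Expla_T(φ) if and only if there exists a cutting C for T and φ such that Mod(T ∪ {ψ}) ≠ Triv and Mod(T ∪ {ψ}) ⊆ 𝕄 for some 𝕄 ∈ Min(C), i.e. iff there is an explanatory relation based on cuttings relating φ to ψ. -/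
variable {Sen M : Type*}

/-- The set of explanations of `φ` over `T`. -/
def Expla (sat : M → Sen → Prop) (T : Set Sen) (φ : Sen) : Set Sen :=
  {ψ | ModS sat (T ∪ {ψ}) ≠ TrivS sat ∧ ∀ m ∈ ModS sat (T ∪ {ψ}), sat m φ}

theorem stmt_4 (sat : M → Sen → Prop) (T : Set Sen) (hT : T.Finite) (φ ψ : Sen) :
    ψ ∈ Expla sat T φ ↔
      ∃ C : Set (Set M), IsCutting sat T φ C ∧ ExplRel sat T C ψ := by

  constructor
  · rintro ⟨hne, hφ⟩
    have hsub : ModS sat (T ∪ {ψ}) ⊆ ModS sat (T ∪ {φ}) := by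
      intro m hm χ hχ
      rcases hχ with h | h
      · exact hm χ (Or.inl h)
      · rw [Set.mem_singleton_iff] at h; subst h; exact hφ m hm
    have htriv : ∀ S : Set Sen, TrivS sat ⊆ ModS sat S := fun S m hm χ _ => hm χ
    have hlt : TrivS sat ⊂ ModS sat (T ∪ {φ}) := by
      refine ⟨htriv _, fun hle => hne ?_⟩
      exact Set.Subset.antisymm (fun m hm => hle (hsub hm)) (htriv _)
    refine ⟨{ModS sat (T ∪ {φ})}, ⟨?_, ?_, ?_, rfl, ?_⟩, hne, ModS sat (T ∪ {φ}), ⟨rfl, ?_⟩, hsub⟩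
    · rintro A rfl; exact subset_rfl
    · rintro A rfl; exact hlt
    · intro S hS hSne
      rw [Set.subset_singleton_iff_eq] at hS
      rcases hS with rfl | rfl
      · exact absurd hSne (by simp)
      · simpa using rfl
    · constructor
      rintro ⟨A, rfl⟩
      constructor
      rintro ⟨B, rfl⟩ h
      exact absurd h (lt_irrefl _)
    · rintro B rfl
      exact lt_irrefl _
  · rintro ⟨C, hC, hne, A, ⟨hAC, _⟩, hsub⟩
    exact ⟨hne, fun m hm => hC.subset_mod A hAC (hsub hm) φ (Or.inr rfl)⟩
end

section
/- Assume that for every class 𝕄 ⊆ Mod there exists a finite set T' ⊆ Sen with Mod(T') = 𝕄 (finite axiomatizability), that the satisfaction system has semantic conjunction, and that there is a sentence ⊤ with Mod(⊤) = Mod. Then for every knowledge base T, every sentence φ and every cutting C_φ for T and φ, there exists ψ ∈ Sen with φ ▷ ψ (with respect to C_φ); in particular Expla_T(φ) ≠ ∅. -/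
variable {Sen M : Type*}

lemma ModS_union (sat : M → Sen → Prop) (T S : Set Sen) :
    ModS sat (T ∪ S) = ModS sat T ∩ ModS sat S := by
  ext m; simp [ModS, or_imp, forall_and]

lemma finite_conj (sat : M → Sen → Prop)
    (conj : ∀ φ₁ φ₂ : Sen, ∃ χ : Sen, ModS sat {χ} = ModS sat {φ₁} ∩ ModS sat {φ₂})
    (top : ∃ τ : Sen, ModS sat {τ} = Set.univ)
    {T' : Set Sen} (h : T'.Finite) : ∃ χ : Sen, ModS sat {χ} = ModS sat T' := by
  refine Set.Finite.induction_on _ h ?_ ?_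
  · obtain ⟨τ, hτ⟩ := top
    exact ⟨τ, by simpa [ModS] using hτ⟩
  · intro a s _ _ ih
    obtain ⟨χs, hχs⟩ := ih
    obtain ⟨χ, hχ⟩ := conj a χs
    refine ⟨χ, ?_⟩
    rw [hχ, hχs]
    ext m
    simp [ModS]

theorem stmt_5 (sat : M → Sen → Prop)
    (finax : ∀ X : Set M, ∃ T' : Set Sen, T'.Finite ∧ ModS sat T' = X)
    (conj : ∀ φ₁ φ₂ : Sen, ∃ χ : Sen, ModS sat {χ} = ModS sat {φ₁} ∩ ModS sat {φ₂})
    (top : ∃ τ : Sen, ModS sat {τ} = Set.univ)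
    (T : Set Sen) (hT : T.Finite) (φ : Sen) (Cφ : Set (Set M))
    (hC : IsCutting sat T φ Cφ) :
    (∃ ψ : Sen, ExplRel sat T Cφ ψ) ∧ (Expla sat T φ).Nonempty := by
  -- find a minimal element of Cφ
  obtain ⟨A, hA, hAmin⟩ :=
    hC.wf.has_min Set.univ (by exact ⟨⟨_, hC.top_mem⟩, Set.mem_univ _⟩)
  have hAC : (A : Set M) ∈ Cφ := A.2
  have hAminC : (A : Set M) ∈ MinCut Cφ := by
    refine ⟨hAC, fun B hB hBA => hAmin ⟨B, hB⟩ (Set.mem_univ _) hBA⟩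
  -- axiomatize A by a single sentence
  obtain ⟨T', hT'fin, hT'⟩ := finax A
  obtain ⟨ψ, hψ⟩ := finite_conj sat conj top hT'fin
  have hψA : ModS sat {ψ} = (A : Set M) := hψ.trans hT'
  -- Mod(T ∪ {ψ}) = A
  have hAsub : (A : Set M) ⊆ ModS sat (T ∪ {φ}) := hC.subset_mod _ hAC
  have hAT : (A : Set M) ⊆ ModS sat T := by
    intro m hm
    exact fun χ hχ => hAsub hm χ (Or.inl hχ)
  have key : ModS sat (T ∪ {ψ}) = (A : Set M) := by
    rw [ModS_union, hψA]
    exact Set.inter_eq_self_of_subset_right hAT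
  have hTriv : TrivS sat ⊂ (A : Set M) := hC.triv_lt _ hAC
  have hne : ModS sat (T ∪ {ψ}) ≠ TrivS sat := by
    rw [key]; exact fun h => hTriv.ne h.symm
  constructor
  · exact ⟨ψ, hne, A, hAminC, key.le⟩
  · refine ⟨ψ, hne, fun m hm => ?_⟩
    rw [key] at hm
    exact hAsub hm φ (Or.inr rfl)
end

section
/- Let C_φ be a cutting for a knowledge base T and a sentence φ. If Mod(φ') ⊆ Mod(φ) and Mod(T ∪ {φ'}) ≠ Triv, then C_{φ'} = {𝕄 ∩ Mod(φ') | 𝕄 ∈ C_φ, 𝕄 ∩ Mod(φ') ≠ Triv} is a cutting for T and φ'. -/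
variable {Sen M : Type*}

theorem stmt_6 (sat : M → Sen → Prop) (T : Set Sen) (hT : T.Finite)
    (φ φ' : Sen) (Cφ : Set (Set M)) (hC : IsCutting sat T φ Cφ)
    (h1 : ModS sat {φ'} ⊆ ModS sat {φ})
    (h2 : ModS sat (T ∪ {φ'}) ≠ TrivS sat) :
    IsCutting sat T φ'
      {B | ∃ A ∈ Cφ, B = A ∩ ModS sat {φ'} ∧ A ∩ ModS sat {φ'} ≠ TrivS sat} := by
  classical
  set Mφ' := ModS sat {φ'} with hMdef
  set C' : Set (Set M) :=
    {B | ∃ A ∈ Cφ, B = A ∩ Mφ' ∧ A ∩ Mφ' ≠ TrivS sat} with hC'def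
  have himp : ∀ m, sat m φ' → sat m φ := by
    intro m hm
    have : m ∈ ModS sat {φ'} := by intro ψ hψ; rcases hψ with rfl; exact hm
    exact h1 this φ rfl
  have hInter : ∀ A, A ⊆ ModS sat (T ∪ {φ}) → A ∩ Mφ' ⊆ ModS sat (T ∪ {φ'}) := by
    intro A hA m hm ψ hψ
    rcases hψ with hψ | hψ
    · exact hA hm.1 ψ (Or.inl hψ)
    · rcases hψ with rfl; exact hm.2 ψ rfl
  have hTriv : ∀ s : Set Sen, TrivS sat ⊆ ModS sat s := fun s m hm ψ _ => hm ψ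
  have hTop : ModS sat (T ∪ {φ}) ∩ Mφ' = ModS sat (T ∪ {φ'}) := by
    apply Set.Subset.antisymm (hInter _ (le_refl _))
    intro m hm
    refine ⟨fun ψ hψ => ?_, fun ψ hψ => ?_⟩
    · rcases hψ with hψ | hψ
      · exact hm ψ (Or.inl hψ)
      · have hψ' : ψ = φ := hψ
        rw [hψ']
        exact himp m (hm φ' (Or.inr rfl))
    · have hψ' : ψ = φ' := hψ
      rw [hψ']
      exact hm φ' (Or.inr rfl)
  have key : ∀ B ∈ C', (⋃₀ {A ∈ Cφ | A ∩ Mφ' ⊆ B}) ∈ Cφ ∧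
      (⋃₀ {A ∈ Cφ | A ∩ Mφ' ⊆ B}) ∩ Mφ' = B := by
    rintro B ⟨A₀, hA₀, rfl, hne⟩
    have hsub : {A ∈ Cφ | A ∩ Mφ' ⊆ A₀ ∩ Mφ'} ⊆ Cφ := fun A hA => hA.1
    have hne' : ({A ∈ Cφ | A ∩ Mφ' ⊆ A₀ ∩ Mφ'}).Nonempty := ⟨A₀, hA₀, le_refl _⟩
    refine ⟨hC.union_closed _ hsub hne', ?_⟩
    apply Set.Subset.antisymm
    · rintro m ⟨⟨A, ⟨hA, hAsub⟩, hmA⟩, hm2⟩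
      exact hAsub ⟨hmA, hm2⟩
    · intro m hm
      exact ⟨⟨A₀, ⟨hA₀, le_refl _⟩, hm.1⟩, hm.2⟩
  have mono : ∀ B ∈ C', ∀ B' ∈ C', B ⊂ B' →
      (⋃₀ {A ∈ Cφ | A ∩ Mφ' ⊆ B}) ⊂ (⋃₀ {A ∈ Cφ | A ∩ Mφ' ⊆ B'}) := by
    intro B hB B' hB' hlt
    have hsub : (⋃₀ {A ∈ Cφ | A ∩ Mφ' ⊆ B}) ⊆ (⋃₀ {A ∈ Cφ | A ∩ Mφ' ⊆ B'}) :=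
      Set.sUnion_subset_sUnion (fun A hA => ⟨hA.1, hA.2.trans hlt.1⟩)
    refine ⟨hsub, fun hcon => ?_⟩
    have : B' ⊆ B := by
      rw [← (key B hB).2, ← (key B' hB').2]
      exact Set.inter_subset_inter_left _ hcon
    exact hlt.2 this
  constructor
  · rintro A ⟨A₀, hA₀, rfl, hne⟩
    exact hInter A₀ (hC.subset_mod A₀ hA₀)
  · rintro A ⟨A₀, hA₀, rfl, hne⟩
    refine ⟨Set.subset_inter (hC.triv_lt A₀ hA₀).1 (hTriv _), ?_⟩
    intro hcon
    exact hne (Set.Subset.antisymm hcon (Set.subset_inter (hC.triv_lt A₀ hA₀).1 (hTriv _)))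
  · rintro S hS ⟨B₀, hB₀⟩
    obtain ⟨A₀, hA₀, hB₀eq, hB₀ne⟩ := hS hB₀
    -- choose a witness for each element of S
    have hwit : ∀ B ∈ S, ∃ A ∈ Cφ, B = A ∩ Mφ' := by
      intro B hB; obtain ⟨A, hA, hEq, _⟩ := hS hB; exact ⟨A, hA, hEq⟩
    choose f hf1 hf2 using hwit
    set S' : Set (Set M) := {A | ∃ B, ∃ hB : B ∈ S, A = f B hB} with hS'def
    have hS'sub : S' ⊆ Cφ := by rintro A ⟨B, hB, rfl⟩; exact hf1 B hB
    have hS'ne : S'.Nonempty := ⟨f B₀ hB₀, B₀, hB₀, rfl⟩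
    have hU : ⋃₀ S = (⋃₀ S') ∩ Mφ' := by
      ext m
      constructor
      · rintro ⟨B, hB, hm⟩
        rw [hf2 B hB] at hm
        exact ⟨⟨f B hB, ⟨B, hB, rfl⟩, hm.1⟩, hm.2⟩
      · rintro ⟨⟨A, ⟨B, hB, rfl⟩, hm⟩, hm2⟩
        exact ⟨B, hB, by rw [hf2 B hB]; exact ⟨hm, hm2⟩⟩
    refine ⟨⋃₀ S', hC.union_closed S' hS'sub hS'ne, hU, ?_⟩
    rw [← hU]
    intro hcon
    apply hB₀ne
    rw [← hB₀eq]
    apply Set.Subset.antisymm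
    · rw [← hcon]; exact Set.subset_sUnion_of_mem hB₀
    · rw [hB₀eq]; exact Set.subset_inter (hC.triv_lt A₀ hA₀).1 (hTriv _)
  · exact ⟨ModS sat (T ∪ {φ}), hC.top_mem, hTop.symm, by rw [hTop]; exact h2⟩
  · have hwfCφ : WellFounded (fun A B : Cφ => (A : Set M) ⊂ B) := hC.wf
    let F : C' → Cφ := fun B => ⟨⋃₀ {A ∈ Cφ | A ∩ Mφ' ⊆ (B : Set M)}, (key B B.2).1⟩
    have hinv : WellFounded (fun a b : C' => (F a : Set M) ⊂ F b) :=
      InvImage.wf F hwfCφ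
    exact Subrelation.wf (fun {a b} h => mono _ a.2 _ b.2 h) hinv
end

section
/- Let C_φ be a cutting for a knowledge base T and a sentence φ, let φ ∧ φ' be a semantic conjunction of φ and φ', and assume Mod(φ') ∩ Mod(T ∪ {φ}) ≠ Triv. Then {𝕄 ∩ Mod(φ') | 𝕄 ∈ C_φ, 𝕄 ∩ Mod(φ') ≠ Triv} is a cutting for T and φ ∧ φ'. -/
variable {Sen M : Type*}

theorem stmt_7 (sat : M → Sen → Prop) (T : Set Sen) (hT : T.Finite)
    (φ φ' χ : Sen) (Cφ : Set (Set M)) (hC : IsCutting sat T φ Cφ)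
    (hconj : ModS sat {χ} = ModS sat {φ} ∩ ModS sat {φ'})
    (h2 : ModS sat {φ'} ∩ ModS sat (T ∪ {φ}) ≠ TrivS sat) :
    IsCutting sat T χ
      {B | ∃ A ∈ Cφ, B = A ∩ ModS sat {φ'} ∧ A ∩ ModS sat {φ'} ≠ TrivS sat} := by
  set P := ModS sat {φ'} with hP
  have hmod : ∀ ψ : Sen, ModS sat (T ∪ {ψ}) = ModS sat T ∩ ModS sat {ψ} := by
    intro ψ; ext m
    simp only [ModS, Set.mem_setOf_eq, Set.mem_inter_iff, Set.mem_union]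
    constructor
    · intro h; exact ⟨fun a ha => h a (Or.inl ha), fun a ha => h a (Or.inr ha)⟩
    · rintro ⟨h1, h2⟩ a (ha | ha)
      · exact h1 a ha
      · exact h2 a ha
  have hkey : ModS sat (T ∪ {χ}) = ModS sat (T ∪ {φ}) ∩ P := by
    rw [hmod, hmod, hconj, hP]
    ext m; simp only [Set.mem_inter_iff]; tauto
  have htriv : ∀ S : Set Sen, TrivS sat ⊆ ModS sat S := fun S m hm ψ _ => hm ψ
  set newC := {B | ∃ A ∈ Cφ, B = A ∩ P ∧ A ∩ P ≠ TrivS sat} with hnewC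
  have hsub : ∀ B ∈ newC, B ⊆ ModS sat (T ∪ {χ}) := by
    rintro B ⟨A, hA, rfl, -⟩
    rw [hkey]
    exact Set.inter_subset_inter_left _ (hC.subset_mod A hA)
  have htl : ∀ B ∈ newC, TrivS sat ⊂ B := by
    rintro B ⟨A, hA, rfl, hne⟩
    exact (Set.subset_inter (hC.triv_lt A hA).1 (htriv _)).ssubset_of_ne (Ne.symm hne)
  refine ⟨hsub, htl, ?_, ?_, ?_⟩
  · -- union_closed
    intro S hS hSne
    set 𝒜 := {A ∈ Cφ | A ∩ P ∈ S} with h𝒜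
    obtain ⟨B₀, hB₀⟩ := hSne
    obtain ⟨A₀, hA₀, hBeq, hBne⟩ := hS hB₀
    have h𝒜ne : 𝒜.Nonempty := ⟨A₀, hA₀, by rw [← hBeq]; exact hB₀⟩
    have hU : ⋃₀ 𝒜 ∈ Cφ := hC.union_closed 𝒜 (fun A hA => hA.1) h𝒜ne
    have heq : ⋃₀ S = ⋃₀ 𝒜 ∩ P := by
      ext m
      simp only [Set.mem_sUnion, Set.mem_inter_iff]
      constructor
      · rintro ⟨B, hB, hm⟩
        obtain ⟨A, hA, rfl, -⟩ := hS hB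
        exact ⟨⟨A, ⟨hA, hB⟩, hm.1⟩, hm.2⟩
      · rintro ⟨⟨A, hA, hm⟩, hmP⟩
        exact ⟨A ∩ P, hA.2, hm, hmP⟩
    refine ⟨⋃₀ 𝒜, hU, heq, ?_⟩
    intro habs
    have : B₀ ⊆ TrivS sat := by
      rw [← habs, ← heq]; exact Set.subset_sUnion_of_mem hB₀
    have h1 : TrivS sat ⊂ B₀ := htl B₀ (hS hB₀)
    exact h1.2 this
  · -- top_mem
    refine ⟨ModS sat (T ∪ {φ}), hC.top_mem, hkey, ?_⟩
    rw [Set.inter_comm]; exact h2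
  · -- wf
    have key : ∀ B : newC, ∃ A : Set M, A ∈ Cφ ∧ A ∩ P = B.1 ∧
        ∀ A' ∈ Cφ, A' ∩ P ⊆ B.1 → A' ⊆ A := by
      rintro ⟨B, hB⟩
      obtain ⟨A₀, hA₀, rfl, hne⟩ := hB
      set 𝒜 := {A' ∈ Cφ | A' ∩ P ⊆ A₀ ∩ P} with h𝒜
      have hU : ⋃₀ 𝒜 ∈ Cφ :=
        hC.union_closed 𝒜 (fun A hA => hA.1) ⟨A₀, hA₀, Set.Subset.rfl⟩
      refine ⟨⋃₀ 𝒜, hU, ?_, fun A' hA' hsub' => Set.subset_sUnion_of_mem ⟨hA', hsub'⟩⟩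
      apply Set.Subset.antisymm
      · rintro m ⟨⟨A', ⟨-, hA'sub⟩, hm⟩, hmP⟩
        exact hA'sub ⟨hm, hmP⟩
      · exact Set.inter_subset_inter_left _ (Set.subset_sUnion_of_mem ⟨hA₀, Set.Subset.rfl⟩)
    choose F hF1 hF2 hF3 using key
    have hwf : WellFounded (fun a b : newC => F a ⊂ F b) := by
      have := hC.wf
      unfold Set.WellFoundedOn at this
      exact InvImage.wf (fun a : newC => (⟨F a, hF1 a⟩ : Cφ)) this
    have hmono : ∀ a b : newC, a.1 ⊂ b.1 → F a ⊂ F b := by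
      intro a b hab
      have hle : F a ⊆ F b := hF3 b (F a) (hF1 a) (by rw [hF2 a]; exact hab.1)
      refine hle.ssubset_of_ne ?_
      intro habs
      have : a.1 = b.1 := by rw [← hF2 a, ← hF2 b, habs]
      exact hab.2 (le_of_eq this.symm)
    exact Subrelation.wf (fun {a b} h => hmono a b h) hwf
end

section
/- Let C_φ be a cutting for a knowledge base T and φ that is totally ordered by inclusion, let φ ∧ φ' be a semantic conjunction, and set C_{φ∧φ'} = {𝕄 ∩ Mod(φ') | 𝕄 ∈ C_φ}. If φ ▷ ψ (with respect to C_φ) and T ∪ {ψ} ⊨ φ', then C_{φ∧φ'} is a cutting for T and φ ∧ φ' and φ ∧ φ' ▷ ψ (with respect to C_{φ∧φ'}). (Cautious monotony E-CM for chain cuttings.) -/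
variable {Sen M : Type*}

lemma modS_union_single (sat : M → Sen → Prop) (T : Set Sen) (x : Sen) :
    ModS sat (T ∪ {x}) = ModS sat T ∩ ModS sat {x} := by
  ext m
  simp only [ModS, Set.mem_union, Set.mem_setOf_eq, Set.mem_inter_iff, Set.mem_singleton_iff]
  constructor
  · intro h; exact ⟨fun a ha => h a (Or.inl ha), fun a ha => h a (Or.inr ha)⟩
  · rintro ⟨h1, h2⟩ a (ha | ha)
    · exact h1 a ha
    · exact h2 a ha

theorem stmt_8 (sat : M → Sen → Prop) (T : Set Sen) (hT : T.Finite)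
    (φ φ' χ ψ : Sen) (Cφ : Set (Set M)) (hC : IsCutting sat T φ Cφ)
    (hchain : IsChain (· ⊆ ·) Cφ)
    (hconj : ModS sat {χ} = ModS sat {φ} ∩ ModS sat {φ'})
    (h1 : ExplRel sat T Cφ ψ)
    (h2 : ModS sat (T ∪ {ψ}) ⊆ ModS sat {φ'}) :
    IsCutting sat T χ ((fun A => A ∩ ModS sat {φ'}) '' Cφ) ∧
      ExplRel sat T ((fun A => A ∩ ModS sat {φ'}) '' Cφ) ψ := by
  obtain ⟨hne, A₀, ⟨hA₀C, hA₀min⟩, hsub⟩ := h1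
  -- A₀ is below every element of the chain
  have hA₀le : ∀ A ∈ Cφ, A₀ ⊆ A := by
    intro A hA
    rcases eq_or_ne A A₀ with rfl | hne'
    · exact le_rfl
    rcases hchain.total hA₀C hA with h | h
    · exact h
    · exact absurd (h.ssubset_of_ne hne') (hA₀min A hA)
  have hTriv : TrivS sat ⊆ ModS sat (T ∪ {ψ}) := fun m hm a _ => hm a
  have hTrivφ' : TrivS sat ⊆ ModS sat {φ'} := fun m hm a _ => hm a
  have hmodχ : ModS sat (T ∪ {χ}) = ModS sat (T ∪ {φ}) ∩ ModS sat {φ'} := by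
    rw [modS_union_single, modS_union_single, hconj, Set.inter_assoc]
  -- a non-trivial model inside Mod(T ∪ {ψ})
  obtain ⟨m₀, hm₀ψ, hm₀nt⟩ := Set.exists_of_ssubset (hTriv.ssubset_of_ne (Ne.symm hne))
  have hm₀ : ∀ A ∈ Cφ, m₀ ∈ A ∩ ModS sat {φ'} :=
    fun A hA => ⟨hA₀le A hA (hsub hm₀ψ), h2 hm₀ψ⟩
  have hcut : IsCutting sat T χ ((fun A => A ∩ ModS sat {φ'}) '' Cφ) := by
    constructor
    · rintro B ⟨A, hA, rfl⟩
      rw [hmodχ]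
      exact Set.inter_subset_inter_left _ (hC.subset_mod A hA)
    · rintro B ⟨A, hA, rfl⟩
      constructor
      · exact Set.subset_inter ((hC.triv_lt A hA).1) hTrivφ'
      · intro hcon
        exact hm₀nt (hcon (hm₀ A hA))
    · intro S hS hSne
      refine ⟨⋃₀ {A | A ∈ Cφ ∧ A ∩ ModS sat {φ'} ∈ S}, ?_, ?_⟩
      · apply hC.union_closed
        · exact fun A hA => hA.1
        · obtain ⟨B, hB⟩ := hSne
          obtain ⟨A, hA, rfl⟩ := hS hB
          exact ⟨A, hA, hB⟩
      · ext m
        simp only [Set.mem_inter_iff, Set.mem_sUnion, Set.mem_setOf_eq]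
        constructor
        · rintro ⟨⟨A, ⟨hA, hAS⟩, hmA⟩, hmφ'⟩
          exact ⟨A ∩ ModS sat {φ'}, hAS, hmA, hmφ'⟩
        · rintro ⟨B, hB, hmB⟩
          obtain ⟨A, hA, rfl⟩ := hS hB
          exact ⟨⟨A, ⟨hA, hB⟩, hmB.1⟩, hmB.2⟩
    · rw [hmodχ]
      exact ⟨ModS sat (T ∪ {φ}), hC.top_mem, rfl⟩
    · -- well-foundedness via choosing preimages in the chain
      have hwfφ : WellFounded fun (a b : Cφ) => a.1 ⊂ b.1 := hC.wf
      have key : ∀ B : ((fun A => A ∩ ModS sat {φ'}) '' Cφ : Set (Set M)),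
          ∃ A : Cφ, A.1 ∩ ModS sat {φ'} = B.1 := by
        rintro ⟨B, A, hA, rfl⟩
        exact ⟨⟨A, hA⟩, rfl⟩
      choose g hg using key
      have : Subrelation (fun (a b : ((fun A => A ∩ ModS sat {φ'}) '' Cφ : Set (Set M))) =>
          a.1 ⊂ b.1) (InvImage (fun (a b : Cφ) => a.1 ⊂ b.1) g) := by
        intro a b hab
        have h1' : (g a).1 ≠ (g b).1 := by
          intro h
          apply hab.ne
          rw [← hg a, ← hg b, h]
        rcases hchain.total (g a).2 (g b).2 with h | h
        · exact h.ssubset_of_ne h1'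
        · exfalso
          apply hab.not_subset
          rw [← hg a, ← hg b]
          exact Set.inter_subset_inter_left _ h
      exact Subrelation.wf this (InvImage.wf g hwfφ)
  refine ⟨hcut, hne, A₀ ∩ ModS sat {φ'}, ⟨⟨A₀, hA₀C, rfl⟩, ?_⟩,
    Set.subset_inter hsub h2⟩
  rintro B ⟨A, hA, rfl⟩ hB
  exact hB.not_subset (Set.inter_subset_inter_left _ (hA₀le A hA))
end

section
/- Let C_φ be a cutting for a knowledge base T and φ, and let ψ ∧ ψ' be a semantic conjunction. If φ ▷ ψ ∧ ψ' (with respect to C_φ) and T ∪ {ψ} ⊨ ψ', then φ ▷ ψ (with respect to C_φ). -/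
variable {Sen M : Type*}

theorem stmt_9 (sat : M → Sen → Prop) (T : Set Sen) (hT : T.Finite)
    (φ ψ ψ' χ : Sen) (Cφ : Set (Set M)) (hC : IsCutting sat T φ Cφ)
    (hconj : ModS sat {χ} = ModS sat {ψ} ∩ ModS sat {ψ'})
    (h1 : ExplRel sat T Cφ χ)
    (h2 : ModS sat (T ∪ {ψ}) ⊆ ModS sat {ψ'}) :
    ExplRel sat T Cφ ψ := by
  have key : ModS sat (T ∪ {ψ}) = ModS sat (T ∪ {χ}) := by
    ext m
    have hχ : sat m χ ↔ sat m ψ ∧ sat m ψ' := by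
      have := Set.ext_iff.mp hconj m
      simpa [ModS, Set.mem_inter_iff] using this
    constructor
    · intro hm
      have hψ' : sat m ψ' := by
        have := h2 hm
        simpa [ModS] using this
      intro τ hτ
      rcases hτ with hτ | hτ
      · exact hm τ (Or.inl hτ)
      · rcases hτ with rfl
        exact hχ.mpr ⟨hm ψ (Or.inr rfl), hψ'⟩
    · intro hm τ hτ
      rcases hτ with hτ | hτ
      · exact hm τ (Or.inl hτ)
      · rcases hτ with rfl
        exact (hχ.mp (hm χ (Or.inr rfl))).1
  rw [ExplRel, key]
  exact h1
end

section
/- Let C_φ be a cutting for a knowledge base T and φ, let φ ∧ φ' be a semantic conjunction, and assume that Triv ⊊ 𝕄 ∩ Mod(φ') for every 𝕄 ∈ C_φ. Then C_{φ∧φ'} = {𝕄 ∩ Mod(φ') | 𝕄 ∈ C_φ} is a cutting for T and φ ∧ φ', and if φ ∧ φ' ▷ ψ (with respect to C_{φ∧φ'}) then φ ▷ ψ (with respect to C_φ). (Rational cut E-R-Cut.) -/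
variable {Sen M : Type*}

theorem stmt_10 (sat : M → Sen → Prop) (T : Set Sen) (hT : T.Finite)
    (φ φ' χ ψ : Sen) (Cφ : Set (Set M)) (hC : IsCutting sat T φ Cφ)
    (hconj : ModS sat {χ} = ModS sat {φ} ∩ ModS sat {φ'})
    (h : ∀ A ∈ Cφ, TrivS sat ⊂ A ∩ ModS sat {φ'}) :
    IsCutting sat T χ ((fun A => A ∩ ModS sat {φ'}) '' Cφ) ∧
      (ExplRel sat T ((fun A => A ∩ ModS sat {φ'}) '' Cφ) ψ → ExplRel sat T Cφ ψ) := by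
  obtain ⟨hsub, htriv, hunion, htop, hwf⟩ := hC
  classical
  set Mp : Set M := ModS sat {φ'} with hMp
  have hmem : ∀ (m : M) (s : Sen), m ∈ ModS sat (T ∪ {s}) ↔ m ∈ ModS sat T ∧ m ∈ ModS sat {s} := by
    intro m s
    simp only [ModS, Set.mem_union, Set.mem_singleton_iff, Set.mem_setOf_eq, or_imp, forall_and, forall_eq]
  have hχ : ModS sat (T ∪ {χ}) = ModS sat (T ∪ {φ}) ∩ Mp := by
    ext m
    have hc := Set.ext_iff.mp hconj m
    simp only [hmem, Set.mem_inter_iff, hMp] at *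
    tauto
  set C' : Set (Set M) := (fun A => A ∩ Mp) '' Cφ with hC'
  set hat : Set M → Set M := fun B => ⋃₀ {A ∈ Cφ | A ∩ Mp ⊆ B} with hhat
  have hat_mem : ∀ B ∈ C', hat B ∈ Cφ := by
    rintro B ⟨A, hA, rfl⟩
    exact hunion _ (fun X hX => hX.1) ⟨A, hA, subset_rfl⟩
  have hat_eq : ∀ B ∈ C', hat B ∩ Mp = B := by
    rintro B ⟨A, hA, rfl⟩
    apply Set.Subset.antisymm
    · rintro x ⟨hx, hxp⟩
      obtain ⟨X, ⟨hX, hXs⟩, hxX⟩ := hx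
      exact hXs ⟨hxX, hxp⟩
    · intro x hx
      exact ⟨⟨A, ⟨hA, subset_rfl⟩, hx.1⟩, hx.2⟩
  have hat_mono : ∀ B B' : Set M, B ⊆ B' → hat B ⊆ hat B' := by
    intro B B' hBB
    apply Set.sUnion_subset_sUnion
    intro X hX
    exact ⟨hX.1, hX.2.trans hBB⟩
  have hat_strict : ∀ B ∈ C', ∀ B' ∈ C', B ⊂ B' → hat B ⊂ hat B' := by
    intro B hB B' hB' hBB
    refine ⟨hat_mono _ _ hBB.subset, fun hle => ?_⟩
    have : B' ⊆ B := by
      rw [← hat_eq B hB, ← hat_eq B' hB']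
      exact Set.inter_subset_inter_left _ hle
    exact hBB.not_subset this
  have hcut : IsCutting sat T χ C' := by
    constructor
    · rintro A ⟨A₀, hA₀, rfl⟩
      rw [hχ]
      exact Set.inter_subset_inter_left _ (hsub A₀ hA₀)
    · rintro A ⟨A₀, hA₀, rfl⟩
      exact h A₀ hA₀
    · intro S hS hSne
      set S₀ : Set (Set M) := {A ∈ Cφ | A ∩ Mp ∈ S} with hS₀
      have hU : ⋃₀ S = (⋃₀ S₀) ∩ Mp := by
        apply Set.Subset.antisymm
        · rintro x ⟨B, hBS, hxB⟩
          obtain ⟨A, hA, rfl⟩ := hS hBS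
          exact ⟨⟨A, ⟨hA, hBS⟩, hxB.1⟩, hxB.2⟩
        · rintro x ⟨⟨A, ⟨hA, hAS⟩, hxA⟩, hxp⟩
          exact ⟨A ∩ Mp, hAS, hxA, hxp⟩
      rw [hU]
      refine ⟨⋃₀ S₀, ?_, rfl⟩
      obtain ⟨B, hB⟩ := hSne
      obtain ⟨A, hA, rfl⟩ := hS hB
      exact hunion S₀ (fun X hX => hX.1) ⟨A, hA, hB⟩
    · exact ⟨ModS sat (T ∪ {φ}), htop, hχ.symm⟩
    · have key : WellFounded fun a b : C' => a.1 ⊂ b.1 := by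
        have hwf' : WellFounded
            (InvImage (fun a b : Cφ => a.1 ⊂ b.1)
              (fun b : C' => (⟨hat b.1, hat_mem b.1 b.2⟩ : Cφ))) :=
          InvImage.wf _ hwf
        exact Subrelation.wf
          (fun {a b} hab => hat_strict a.1 a.2 b.1 b.2 hab) hwf'
      exact key
  refine ⟨hcut, ?_⟩
  rintro ⟨hne, B, ⟨hBC', hBmin⟩, hψB⟩
  refine ⟨hne, ?_⟩
  have hmin := WellFounded.has_min hwf {a : Cφ | a.1 ⊆ hat B}
    ⟨⟨hat B, hat_mem B hBC'⟩, show hat B ⊆ hat B from subset_rfl⟩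
  obtain ⟨A, hAsub, hAmin⟩ := hmin
  have hAMin : A.1 ∈ MinCut Cφ := by
    refine ⟨A.2, fun B₂ hB₂ hB₂A => ?_⟩
    exact hAmin ⟨B₂, hB₂⟩ (hB₂A.subset.trans hAsub) hB₂A
  have hAC' : A.1 ∩ Mp ∈ C' := ⟨A.1, A.2, rfl⟩
  have hsubB : A.1 ∩ Mp ⊆ B := by
    rw [← hat_eq B hBC']
    exact Set.inter_subset_inter_left _ hAsub
  have heq : A.1 ∩ Mp = B := by
    by_contra hne'
    exact hBmin _ hAC' ⟨hsubB, fun hle => hne' (Set.Subset.antisymm hsubB hle)⟩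
  refine ⟨A.1, hAMin, ?_⟩
  intro x hx
  exact (heq ▸ hψB hx : x ∈ A.1 ∩ Mp).1
end

section
/- Let C_{φ∨φ'} be a cutting for a knowledge base T and a semantic disjunction φ ∨ φ', and assume that Triv ⊊ 𝕄 ∩ Mod(φ) for every 𝕄 ∈ C_{φ∨φ'}. Then C_φ = {𝕄 ∩ Mod(φ) | 𝕄 ∈ C_{φ∨φ'}} is a cutting for T and φ, and if φ ▷ ψ (with respect to C_φ) then φ ∨ φ' ▷ ψ (with respect to C_{φ∨φ'}). -/
variable {Sen M : Type*}

theorem stmt_11 (sat : M → Sen → Prop) (T : Set Sen) (hT : T.Finite)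
    (φ φ' χ ψ : Sen) (C : Set (Set M))
    (hdisj : ModS sat {χ} = ModS sat {φ} ∪ ModS sat {φ'})
    (hC : IsCutting sat T χ C)
    (h : ∀ A ∈ C, TrivS sat ⊂ A ∩ ModS sat {φ}) :
    IsCutting sat T φ ((fun A => A ∩ ModS sat {φ}) '' C) ∧
      (ExplRel sat T ((fun A => A ∩ ModS sat {φ}) '' C) ψ → ExplRel sat T C ψ) := by
  classical
  have hmod : ∀ ρ : Sen, ModS sat (T ∪ {ρ}) = ModS sat T ∩ ModS sat {ρ} := by
    intro ρ
    ext m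
    constructor
    · intro hm
      exact ⟨fun a ha => hm a (Or.inl ha), fun a ha => hm a (Or.inr ha)⟩
    · rintro ⟨h1, h2⟩ a (ha | ha)
      · exact h1 a ha
      · exact h2 a ha
  have htop : ModS sat (T ∪ {χ}) ∩ ModS sat {φ} = ModS sat (T ∪ {φ}) := by
    rw [hmod, hmod, hdisj]
    ext m
    simp only [Set.mem_inter_iff, Set.mem_union]
    tauto
  set Mφ := ModS sat {φ} with hMφdef
  set C' := (fun A => A ∩ Mφ) '' C with hC'def
  have hG : ∀ B ∈ C', (⋃₀ {A ∈ C | A ∩ Mφ ⊆ B}) ∈ C ∧ (⋃₀ {A ∈ C | A ∩ Mφ ⊆ B}) ∩ Mφ = B := by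
    rintro B ⟨A₀, hA₀, rfl⟩
    have hne : A₀ ∈ {A ∈ C | A ∩ Mφ ⊆ A₀ ∩ Mφ} := ⟨hA₀, subset_rfl⟩
    refine ⟨hC.union_closed _ (fun A hA => hA.1) ⟨A₀, hne⟩, ?_⟩
    apply subset_antisymm
    · rintro m ⟨⟨A, hA, hmA⟩, hm2⟩
      exact hA.2 ⟨hmA, hm2⟩
    · intro m hm
      exact ⟨⟨A₀, hne, hm.1⟩, hm.2⟩
  have cutting : IsCutting sat T φ C' := by
    constructor
    · rintro _ ⟨A, hA, rfl⟩
      rw [← htop]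
      exact Set.inter_subset_inter_left _ (hC.subset_mod A hA)
    · rintro _ ⟨A, hA, rfl⟩
      exact h A hA
    · intro S hS hSne
      set S₀ := {A ∈ C | A ∩ Mφ ∈ S} with hS₀def
      obtain ⟨B, hB⟩ := hSne
      obtain ⟨A₀, hA₀, rfl⟩ := hS hB
      have hS₀ne : S₀.Nonempty := ⟨A₀, hA₀, hB⟩
      refine ⟨⋃₀ S₀, hC.union_closed _ (fun A hA => hA.1) hS₀ne, ?_⟩
      apply subset_antisymm
      · rintro m ⟨⟨A, hA, hmA⟩, hm2⟩
        exact ⟨A ∩ Mφ, hA.2, hmA, hm2⟩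
      · rintro m ⟨B, hBS, hmB⟩
        obtain ⟨A, hA, rfl⟩ := hS hBS
        exact ⟨⟨A, ⟨hA, hBS⟩, hmB.1⟩, hmB.2⟩
    · exact ⟨ModS sat (T ∪ {χ}), hC.top_mem, htop⟩
    · -- well-foundedness via the canonical section into C
      have wfC : WellFounded (fun a b : ↥C => (a : Set M) ⊂ (b : Set M)) := hC.wf
      refine Subrelation.wf (r := InvImage (fun a b : ↥C => (a : Set M) ⊂ (b : Set M))
        (fun b : ↥C' => (⟨⋃₀ {A ∈ C | A ∩ Mφ ⊆ (b : Set M)}, (hG _ b.2).1⟩ : ↥C))) ?_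
        (InvImage.wf _ wfC)
      rintro ⟨B₁, hB₁⟩ ⟨B₂, hB₂⟩ hlt
      have hmono : (⋃₀ {A ∈ C | A ∩ Mφ ⊆ B₁}) ⊆ ⋃₀ {A ∈ C | A ∩ Mφ ⊆ B₂} := by
        apply Set.sUnion_subset_sUnion
        intro A hA
        exact ⟨hA.1, hA.2.trans hlt.1⟩
      refine ⟨hmono, fun hback => ?_⟩
      have : B₂ ⊆ B₁ := by
        rw [← (hG _ hB₂).2, ← (hG _ hB₁).2]
        exact Set.inter_subset_inter_left _ hback
      exact hlt.2 this
  refine ⟨cutting, ?_⟩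
  rintro ⟨hne, B, ⟨hBC', hBmin⟩, hsub⟩
  obtain ⟨A₀, hA₀, rfl⟩ := hBC'
  have wfC : WellFounded (fun a b : ↥C => (a : Set M) ⊂ (b : Set M)) := hC.wf
  obtain ⟨⟨A, hAC⟩, hAsub, hAmin⟩ :=
    wfC.has_min {a : ↥C | (a : Set M) ⊆ A₀} ⟨⟨A₀, hA₀⟩, Set.mem_setOf_eq ▸ subset_rfl⟩
  have hAminC : A ∈ MinCut C := by
    refine ⟨hAC, fun X hX hXA => ?_⟩
    exact hAmin ⟨X, hX⟩ (hXA.1.trans hAsub) hXA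
  have hmemC' : A ∩ Mφ ∈ C' := ⟨A, hAC, rfl⟩
  have heq : A ∩ Mφ = A₀ ∩ Mφ := by
    by_contra hne'
    exact hBmin _ hmemC' ⟨Set.inter_subset_inter_left _ hAsub, fun hb =>
      hne' (subset_antisymm (Set.inter_subset_inter_left _ hAsub) hb)⟩
  exact ⟨hne, A, hAminC, fun m hm => (heq.symm ▸ hsub hm : m ∈ A ∩ Mφ).1⟩
end

section
/- Let C_{φ∨φ'} be a cutting for a knowledge base T and a semantic disjunction φ ∨ φ' that is totally ordered by inclusion. If φ ∨ φ' ▷ ψ (with respect to C_{φ∨φ'}) and T ∪ {ψ} ⊨ φ, then C_φ = {𝕄 ∩ Mod(φ) | 𝕄 ∈ C_{φ∨φ'}} is a cutting for T and φ and φ ▷ ψ (with respect to C_φ). -/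
variable {Sen M : Type*}

theorem stmt_12 (sat : M → Sen → Prop) (T : Set Sen) (hT : T.Finite)
    (φ φ' χ ψ : Sen) (C : Set (Set M))
    (hdisj : ModS sat {χ} = ModS sat {φ} ∪ ModS sat {φ'})
    (hC : IsCutting sat T χ C) (hchain : IsChain (· ⊆ ·) C)
    (h1 : ExplRel sat T C ψ)
    (h2 : ModS sat (T ∪ {ψ}) ⊆ ModS sat {φ}) :
    IsCutting sat T φ ((fun A => A ∩ ModS sat {φ}) '' C) ∧
      ExplRel sat T ((fun A => A ∩ ModS sat {φ}) '' C) ψ := by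
  classical
  obtain ⟨hne, A0, ⟨hA0C, hA0min⟩, hsub⟩ := h1
  set Mφ : Set M := ModS sat {φ} with hMφ
  -- A0 is the minimum of C
  have hmin : ∀ A ∈ C, A0 ⊆ A := by
    intro A hA
    rcases hchain.total hA0C hA with h | h
    · exact h
    · rcases eq_or_ne A A0 with rfl | hne'
      · exact subset_rfl
      · exact absurd (ssubset_of_subset_of_ne h hne') (hA0min A hA)
  -- Triv ⊆ any model class
  have htriv_sub : ∀ S : Set Sen, TrivS sat ⊆ ModS sat S := fun S m hm σ _ => hm σ
  have hTψ : TrivS sat ⊂ ModS sat (T ∪ {ψ}) :=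
    ssubset_of_subset_of_ne (htriv_sub _) (Ne.symm hne)
  -- models of union
  have hmod_union : ∀ σ : Sen, ModS sat (T ∪ {σ}) = ModS sat T ∩ ModS sat {σ} := by
    intro σ
    ext m
    simp only [ModS, Set.mem_setOf_eq, Set.mem_inter_iff, Set.mem_union, Set.mem_singleton_iff]
    constructor
    · intro h
      exact ⟨fun τ hτ => h τ (Or.inl hτ), fun τ hτ => h τ (Or.inr hτ)⟩
    · rintro ⟨h1, h2⟩ τ (hτ | hτ)
      · exact h1 τ hτ
      · exact h2 τ hτ
  have hkey : ModS sat (T ∪ {χ}) ∩ Mφ = ModS sat (T ∪ {φ}) := by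
    rw [hmod_union, hmod_union, hdisj, Set.inter_assoc, Set.union_inter_cancel_left]
  -- every image element contains Mod(T ∪ {ψ})
  have hsub2 : ∀ A ∈ C, ModS sat (T ∪ {ψ}) ⊆ A ∩ Mφ := by
    intro A hA
    exact Set.subset_inter ((hsub.trans (hmin A hA))) h2
  set C' : Set (Set M) := (fun A => A ∩ Mφ) '' C with hC'
  -- the "fiber union" map
  set F : Set M → Set M := fun B => ⋃₀ {A ∈ C | A ∩ Mφ = B} with hF
  have hF_mem : ∀ B ∈ C', F B ∈ C := by
    rintro B ⟨A, hA, rfl⟩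
    exact hC.union_closed _ (Set.sep_subset _ _) ⟨A, hA, rfl⟩
  have hF_inter : ∀ B ∈ C', F B ∩ Mφ = B := by
    rintro B ⟨A, hA, rfl⟩
    apply Set.Subset.antisymm
    · rintro m ⟨hm, hmφ⟩
      obtain ⟨A', ⟨hA'C, hA'eq⟩, hmA'⟩ := hm
      rw [← hA'eq]
      exact ⟨hmA', hmφ⟩
    · intro m hm
      exact ⟨Set.mem_sUnion.mpr ⟨A, ⟨hA, rfl⟩, hm.1⟩, hm.2⟩
  have hF_strict : ∀ B1 ∈ C', ∀ B2 ∈ C', B1 ⊂ B2 → F B1 ⊂ F B2 := by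
    intro B1 h1' B2 h2' hlt
    rcases hchain.total (hF_mem B1 h1') (hF_mem B2 h2') with h | h
    · refine ssubset_of_subset_of_ne h ?_
      intro heq
      rw [← hF_inter B1 h1', ← hF_inter B2 h2', heq] at hlt
      exact hlt.ne rfl
    · exfalso
      have : B2 ⊆ B1 := by
        rw [← hF_inter B1 h1', ← hF_inter B2 h2']
        exact Set.inter_subset_inter_left _ h
      exact hlt.not_subset this
  have hcut : IsCutting sat T φ C' := by
    constructor
    · rintro B ⟨A, hA, rfl⟩
      rw [← hkey]
      exact Set.inter_subset_inter_left _ (hC.subset_mod A hA)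
    · rintro B ⟨A, hA, rfl⟩
      exact hTψ.trans_subset (hsub2 A hA)
    · intro S hS hSne
      set S' : Set (Set M) := {A ∈ C | A ∩ Mφ ∈ S} with hS'
      obtain ⟨B, hB⟩ := hSne
      obtain ⟨A, hA, rfl⟩ := hS hB
      have hU : ⋃₀ S' ∈ C := hC.union_closed _ (Set.sep_subset _ _) ⟨A, hA, hB⟩
      have : ⋃₀ S = (⋃₀ S') ∩ Mφ := by
        apply Set.Subset.antisymm
        · rintro m ⟨B', hB', hm⟩
          obtain ⟨A', hA', rfl⟩ := hS hB'
          exact ⟨⟨A', ⟨hA', hB'⟩, hm.1⟩, hm.2⟩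
        · rintro m ⟨⟨A', ⟨hA'C, hA'S⟩, hm⟩, hmφ⟩
          exact ⟨A' ∩ Mφ, hA'S, hm, hmφ⟩
      rw [this]
      exact ⟨⋃₀ S', hU, rfl⟩
    · exact ⟨ModS sat (T ∪ {χ}), hC.top_mem, hkey⟩
    · -- well-foundedness via F
      have hwf : WellFounded (fun a b : C => (a : Set M) ⊂ b) := hC.wf
      have : Subrelation (fun a b : C' => (a : Set M) ⊂ b)
          (InvImage (fun a b : C => (a : Set M) ⊂ b)
            (fun B => ⟨F B, hF_mem B B.2⟩)) := by
        intro a b hab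
        exact hF_strict a a.2 b b.2 hab
      exact Subrelation.wf this (InvImage.wf _ hwf)
  refine ⟨hcut, hne, A0 ∩ Mφ, ⟨⟨A0, hA0C, rfl⟩, ?_⟩, Set.subset_inter hsub h2⟩
  rintro B ⟨A, hA, rfl⟩ hlt
  exact hlt.not_subset (Set.inter_subset_inter_left _ (hmin A hA))
end

section
/- Let C_φ be a cutting for a knowledge base T and φ that is totally ordered by inclusion, and let ψ ∨ ψ' be a semantic disjunction. If φ ▷ ψ and φ ▷ ψ' (both with respect to C_φ), then φ ▷ ψ ∨ ψ' (with respect to C_φ). (Right disjunction ROR.) -/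
variable {Sen M : Type*}

theorem stmt_13 (sat : M → Sen → Prop) (T : Set Sen) (hT : T.Finite)
    (φ ψ ψ' χ : Sen) (Cφ : Set (Set M)) (hC : IsCutting sat T φ Cφ)
    (hchain : IsChain (· ⊆ ·) Cφ)
    (hdisj : ModS sat {χ} = ModS sat {ψ} ∪ ModS sat {ψ'})
    (h1 : ExplRel sat T Cφ ψ) (h2 : ExplRel sat T Cφ ψ') :
    ExplRel sat T Cφ χ := by
  obtain ⟨hne1, A, hA, hsubA⟩ := h1
  obtain ⟨hne2, B, hB, hsubB⟩ := h2
  have hdisj' : ∀ m, sat m χ ↔ sat m ψ ∨ sat m ψ' := by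
    intro m
    have := Set.ext_iff.mp hdisj m
    simpa [ModS] using this
  have key : ModS sat (T ∪ {χ}) = ModS sat (T ∪ {ψ}) ∪ ModS sat (T ∪ {ψ'}) := by
    ext m
    simp only [ModS, Set.mem_union, Set.mem_setOf_eq, Set.mem_union, Set.mem_singleton_iff]
    constructor
    · intro h
      have hT' : ∀ x ∈ T, sat m x := fun x hx => h x (Or.inl hx)
      have hχ : sat m χ := h χ (Or.inr rfl)
      rcases (hdisj' m).mp hχ with hψ | hψ
      · exact Or.inl (fun x hx => by rcases hx with hx | hx; exact hT' x hx; subst hx; exact hψ)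
      · exact Or.inr (fun x hx => by rcases hx with hx | hx; exact hT' x hx; subst hx; exact hψ)
    · rintro (h | h) x (hx | hx)
      · exact h x (Or.inl hx)
      · subst hx; exact (hdisj' m).mpr (Or.inl (h ψ (Or.inr rfl)))
      · exact h x (Or.inl hx)
      · subst hx; exact (hdisj' m).mpr (Or.inr (h ψ' (Or.inr rfl)))
  have hAB : A = B := by
    rcases eq_or_ne A B with h | h
    · exact h
    · rcases hchain hA.1 hB.1 h with hle | hle
      · exact absurd (ssubset_of_subset_of_ne hle h) (hB.2 A hA.1)
      · exact absurd (ssubset_of_subset_of_ne hle h.symm) (hA.2 B hB.1)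
  constructor
  · intro hcontra
    apply hne1
    have htriv : TrivS sat ⊆ ModS sat (T ∪ {ψ}) := fun m hm x _ => hm x
    have : ModS sat (T ∪ {ψ}) ⊆ TrivS sat := by
      rw [← hcontra, key]; exact Set.subset_union_left
    exact Set.Subset.antisymm this htriv
  · exact ⟨A, hA, by rw [key, hAB]; exact Set.union_subset (hAB ▸ hsubA) hsubB⟩
end

section
/- Let C_φ be a cutting for a knowledge base T and φ, let C_{φ'} be a cutting for T and φ', and let φ ∨ φ' be a semantic disjunction. Then C_φ ⊕ C_{φ'} = {A ∪ B | A ∈ C_φ, B ∈ C_{φ'}} is a cutting for T and φ ∨ φ'. -/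
variable {Sen M : Type*}

theorem stmt_15 (sat : M → Sen → Prop) (T : Set Sen) (hT : T.Finite)
    (φ φ' χ : Sen) (Cφ Cφ' : Set (Set M))
    (hCφ : IsCutting sat T φ Cφ) (hCφ' : IsCutting sat T φ' Cφ')
    (hdisj : ModS sat {χ} = ModS sat {φ} ∪ ModS sat {φ'}) :
    IsCutting sat T χ {X | ∃ A ∈ Cφ, ∃ B ∈ Cφ', X = A ∪ B} := by
  classical
  have hsat : ∀ m, sat m χ ↔ sat m φ ∨ sat m φ' := by
    intro m
    have : m ∈ ModS sat {χ} ↔ m ∈ ModS sat {φ} ∪ ModS sat {φ'} := by rw [hdisj]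
    simpa [ModS, Set.mem_union] using this
  have hmem : ∀ (θ : Sen) (m : M), m ∈ ModS sat (T ∪ {θ}) ↔ (∀ ψ ∈ T, sat m ψ) ∧ sat m θ := by
    intro θ m
    constructor
    · intro h
      exact ⟨fun ψ hψ => h ψ (Set.mem_union_left _ hψ), h θ (Set.mem_union_right _ rfl)⟩
    · rintro ⟨h1, h2⟩ ψ hψ
      rcases hψ with hψ | hψ
      · exact h1 ψ hψ
      · have : ψ = θ := hψ
        exact this ▸ h2
  have hmod : ModS sat (T ∪ {χ}) = ModS sat (T ∪ {φ}) ∪ ModS sat (T ∪ {φ'}) := by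
    ext m
    simp only [Set.mem_union, hmem, hsat]
    tauto
  set Cc : Set (Set M) := {X | ∃ A ∈ Cφ, ∃ B ∈ Cφ', X = A ∪ B} with hCc
  set mA : Set M → Set M := fun X => ⋃₀ {A | A ∈ Cφ ∧ A ⊆ X} with hmA
  set mB : Set M → Set M := fun X => ⋃₀ {B | B ∈ Cφ' ∧ B ⊆ X} with hmB
  have hmAmem : ∀ X ∈ Cc, mA X ∈ Cφ ∧ mB X ∈ Cφ' ∧ X = mA X ∪ mB X := by
    rintro X ⟨A, hA, B, hB, rfl⟩
    have h1 : mA (A ∪ B) ∈ Cφ :=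
      hCφ.union_closed {A' | A' ∈ Cφ ∧ A' ⊆ A ∪ B} (fun Y hY => hY.1)
        ⟨A, hA, Set.subset_union_left⟩
    have h2 : mB (A ∪ B) ∈ Cφ' :=
      hCφ'.union_closed {B' | B' ∈ Cφ' ∧ B' ⊆ A ∪ B} (fun Y hY => hY.1)
        ⟨B, hB, Set.subset_union_right⟩
    refine ⟨h1, h2, ?_⟩
    apply Set.Subset.antisymm
    · exact Set.union_subset_union
        (Set.subset_sUnion_of_mem ⟨hA, Set.subset_union_left⟩)
        (Set.subset_sUnion_of_mem ⟨hB, Set.subset_union_right⟩)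
    · exact Set.union_subset (Set.sUnion_subset fun Y hY => hY.2)
        (Set.sUnion_subset fun Y hY => hY.2)
  have hmono : ∀ X Y : Set M, X ⊆ Y → mA X ⊆ mA Y ∧ mB X ⊆ mB Y := by
    intro X Y hXY
    constructor <;> exact Set.sUnion_subset_sUnion (fun Z hZ => ⟨hZ.1, hZ.2.trans hXY⟩)
  refine ⟨?_, ?_, ?_, ?_, ?_⟩
  · rintro X ⟨A, hA, B, hB, rfl⟩
    rw [hmod]
    exact Set.union_subset_union (hCφ.subset_mod A hA) (hCφ'.subset_mod B hB)
  · rintro X ⟨A, hA, B, hB, rfl⟩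
    exact (hCφ.triv_lt A hA).trans_subset Set.subset_union_left
  · intro S hS hSne
    obtain ⟨X0, hX0⟩ := hSne
    obtain ⟨A0, hA0, B0, hB0, hX0eq⟩ := hS hX0
    refine ⟨⋃₀ {A | A ∈ Cφ ∧ ∃ B ∈ Cφ', A ∪ B ∈ S},
      hCφ.union_closed _ (fun Y hY => hY.1) ⟨A0, hA0, B0, hB0, hX0eq ▸ hX0⟩,
      ⋃₀ {B | B ∈ Cφ' ∧ ∃ A ∈ Cφ, A ∪ B ∈ S},
      hCφ'.union_closed _ (fun Y hY => hY.1) ⟨B0, hB0, A0, hA0, hX0eq ▸ hX0⟩, ?_⟩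
    apply Set.Subset.antisymm
    · intro m hm
      obtain ⟨X, hXS, hmX⟩ := hm
      obtain ⟨A, hA, B, hB, rfl⟩ := hS hXS
      rcases hmX with hm | hm
      · exact Or.inl ⟨A, ⟨hA, B, hB, hXS⟩, hm⟩
      · exact Or.inr ⟨B, ⟨hB, A, hA, hXS⟩, hm⟩
    · apply Set.union_subset
      · apply Set.sUnion_subset
        rintro A ⟨hA, B, hB, hABS⟩
        exact (Set.subset_union_left (s := A) (t := B)).trans (Set.subset_sUnion_of_mem hABS)
      · apply Set.sUnion_subset
        rintro B ⟨hB, A, hA, hABS⟩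
        exact (Set.subset_union_right (s := A) (t := B)).trans (Set.subset_sUnion_of_mem hABS)
  · exact ⟨_, hCφ.top_mem, _, hCφ'.top_mem, hmod⟩
  · have hlex : WellFounded (Prod.Lex (fun a b : ↥Cφ => (a : Set M) ⊂ b)
        (fun a b : ↥Cφ' => (a : Set M) ⊂ b)) :=
      WellFounded.prod_lex hCφ.wf hCφ'.wf
    set f : ↥Cc → ↥Cφ × ↥Cφ' := fun x =>
      (⟨mA x, (hmAmem x x.2).1⟩, ⟨mB x, (hmAmem x x.2).2.1⟩) with hf
    have hsubrel : Subrelation (fun a b : ↥Cc => (a : Set M) ⊂ b)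
        (InvImage (Prod.Lex (fun a b : ↥Cφ => (a : Set M) ⊂ b)
          (fun a b : ↥Cφ' => (a : Set M) ⊂ b)) f) := by
      intro a b hab
      have ha := hmAmem a a.2
      have hb := hmAmem b b.2
      have h1 : mA a ⊆ mA b := (hmono _ _ hab.subset).1
      have h2 : mB a ⊆ mB b := (hmono _ _ hab.subset).2
      show Prod.Lex _ _ (f a) (f b)
      by_cases hAeq : mA (a : Set M) = mA (b : Set M)
      · have heq : (⟨mA a, (hmAmem a a.2).1⟩ : ↥Cφ) = ⟨mA b, (hmAmem b b.2).1⟩ :=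
          Subtype.ext hAeq
        have hBlt : mB (a : Set M) ⊂ mB (b : Set M) := by
          refine h2.ssubset_of_ne fun hBeq => hab.ne ?_
          rw [ha.2.2, hb.2.2, hAeq, hBeq]
        simp only [hf, heq]
        exact Prod.Lex.right _ hBlt
      · exact Prod.Lex.left _ _ (h1.ssubset_of_ne hAeq)
    exact Subrelation.wf hsubrel (InvImage.wf f hlex)
end

section
/- Let C_φ and C_{φ'} be cuttings for a knowledge base T and sentences φ and φ' respectively, both totally ordered by inclusion, let φ ∨ φ' be a semantic disjunction, and take C_φ ⊕ C_{φ'} = {A ∪ B | A ∈ C_φ, B ∈ C_{φ'}} as the cutting for T and φ ∨ φ'. If φ ▷ ψ (with respect to C_φ) or φ' ▷ ψ (with respect to C_{φ'}), then φ ∨ φ' ▷ ψ (with respect to C_φ ⊕ C_{φ'}). (Strengthened disjunctive rationality E-DR.) -/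
variable {Sen M : Type*}

lemma cutting_exists_min {sat : M → Sen → Prop} {T : Set Sen} {φ : Sen} {C : Set (Set M)}
    (h : IsCutting sat T φ C) : ∃ A ∈ C, ∀ B ∈ C, ¬ B ⊂ A := by
  have hwf := Set.wellFoundedOn_iff.mp h.wf
  obtain ⟨m, hm, hmin⟩ := hwf.has_min C ⟨_, h.top_mem⟩
  exact ⟨m, hm, fun B hB hBm => hmin B hB ⟨hBm, hB, hm⟩⟩

lemma min_le {C : Set (Set M)} (hchain : IsChain (· ⊆ ·) C) {A : Set M} (hA : A ∈ C)
    (hmin : ∀ B ∈ C, ¬ B ⊂ A) : ∀ B ∈ C, A ⊆ B := by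
  intro B hB
  rcases eq_or_ne B A with rfl | hne
  · exact subset_rfl
  rcases hchain hB hA hne with h1 | h1
  · exact absurd ((Set.ssubset_iff_subset_ne.mpr ⟨h1, hne⟩)) (hmin B hB)
  · exact h1

lemma union_min {Cφ Cφ' : Set (Set M)}
    (hchain : IsChain (· ⊆ ·) Cφ) (hchain' : IsChain (· ⊆ ·) Cφ')
    {A B : Set M} (hA : A ∈ Cφ) (hAmin : ∀ X ∈ Cφ, ¬ X ⊂ A)
    (hB : B ∈ Cφ') (hBmin : ∀ X ∈ Cφ', ¬ X ⊂ B) :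
    A ∪ B ∈ MinCut {X | ∃ A ∈ Cφ, ∃ B ∈ Cφ', X = A ∪ B} := by
  refine ⟨⟨A, hA, B, hB, rfl⟩, ?_⟩
  rintro X ⟨A', hA', B', hB', rfl⟩ hlt
  exact hlt.not_subset
    (Set.union_subset_union (min_le hchain hA hAmin A' hA') (min_le hchain' hB hBmin B' hB'))

theorem stmt_16 (sat : M → Sen → Prop) (T : Set Sen) (hT : T.Finite)
    (φ φ' χ ψ : Sen) (Cφ Cφ' : Set (Set M))
    (hCφ : IsCutting sat T φ Cφ) (hCφ' : IsCutting sat T φ' Cφ')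
    (hchain : IsChain (· ⊆ ·) Cφ) (hchain' : IsChain (· ⊆ ·) Cφ')
    (hdisj : ModS sat {χ} = ModS sat {φ} ∪ ModS sat {φ'})
    (h : ExplRel sat T Cφ ψ ∨ ExplRel sat T Cφ' ψ) :
    ExplRel sat T {X | ∃ A ∈ Cφ, ∃ B ∈ Cφ', X = A ∪ B} ψ := by
  rcases h with ⟨hnt, A, ⟨hA, hAmin⟩, hsub⟩ | ⟨hnt, B, ⟨hB, hBmin⟩, hsub⟩
  · obtain ⟨B, hB, hBmin⟩ := cutting_exists_min hCφ'
    exact ⟨hnt, A ∪ B, union_min hchain hchain' hA hAmin hB hBmin,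
      hsub.trans Set.subset_union_left⟩
  · obtain ⟨A, hA, hAmin⟩ := cutting_exists_min hCφ
    exact ⟨hnt, A ∪ B, union_min hchain hchain' hA hAmin hB hBmin,
      hsub.trans Set.subset_union_right⟩
end

section
/- Let κ : Sen → Sen be a retraction (anti-extensive on all sentences and satisfying the vacuum property on all sentences φ with Mod(φ) ≠ Triv). Let T be a knowledge base, τ a sentence with Mod(τ) = Mod(T), φ a sentence with Mod(T ∪ {φ}) ≠ Triv, and ∧ a semantic conjunction. Then both C_lcr = {Mod(κ^k(τ) ∧ φ) | k ∈ ℕ, Mod(κ^k(τ) ∧ φ) ≠ Triv} and C_lnr = {Mod(κ^k(τ ∧ φ)) | k ∈ ℕ, Mod(κ^k(τ ∧ φ)) ≠ Triv} are cuttings for T and φ. -/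
variable {Sen M : Type*}

lemma triv_sub (sat : M → Sen → Prop) (S : Set Sen) : TrivS sat ⊆ ModS sat S :=
  fun m hm ψ _ => hm ψ

lemma modS_union (sat : M → Sen → Prop) (T U : Set Sen) :
    ModS sat (T ∪ U) = ModS sat T ∩ ModS sat U := by
  ext m; constructor
  · intro h; exact ⟨fun ψ hψ => h ψ (Or.inl hψ), fun ψ hψ => h ψ (Or.inr hψ)⟩
  · rintro ⟨h1, h2⟩ ψ (hψ|hψ); exacts [h1 ψ hψ, h2 ψ hψ]

lemma cutting_gen (sat : M → Sen → Prop) (T : Set Sen) (φ : Sen)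
    (hφ : ModS sat (T ∪ {φ}) ≠ TrivS sat)
    (f : ℕ → Set M)
    (hmono : ∀ k, f (k+1) ⊆ f k)
    (h0 : f 0 = ModS sat (T ∪ {φ}))
    (htriv : ∀ k, TrivS sat ⊆ f k)
    (hN : ∃ N, f N ⊆ TrivS sat) :
    IsCutting sat T φ {X | ∃ k, X = f k ∧ X ≠ TrivS sat} := by
  have hanti : ∀ j k, j ≤ k → f k ⊆ f j := by
    intro j k hjk
    induction k with
    | zero => simp_all
    | succ n ih =>
      rcases Nat.lt_or_ge j (n+1) with h | h
      · exact (hmono n).trans (ih (Nat.lt_succ_iff.mp h))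
      · have : j = n+1 := le_antisymm hjk h
        subst this; exact subset_rfl
  obtain ⟨N, hNtr⟩ := hN
  constructor
  · rintro A ⟨k, rfl, -⟩
    exact h0 ▸ hanti 0 k (Nat.zero_le k)
  · rintro A ⟨k, rfl, hne⟩
    exact lt_of_le_of_ne (htriv k) (Ne.symm hne)
  · intro S hS ⟨A, hA⟩
    obtain ⟨k, rfl, hne⟩ := hS hA
    have hKne : {j | f j ∈ S}.Nonempty := ⟨k, hA⟩
    set m := sInf {j | f j ∈ S} with hm
    have hmS : f m ∈ S := Nat.sInf_mem hKne
    have : ⋃₀ S = f m := by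
      apply subset_antisymm
      · intro x hx
        obtain ⟨B, hB, hxB⟩ := hx
        obtain ⟨j, rfl, -⟩ := hS hB
        exact hanti m j (Nat.sInf_le hB) hxB
      · exact Set.subset_sUnion_of_mem hmS
    rw [this]
    exact hS hmS
  · exact ⟨0, h0.symm, hφ⟩
  · have hfin : {X | ∃ k, X = f k ∧ X ≠ TrivS sat}.Finite := by
      apply Set.Finite.subset ((Set.finite_Iio N).image f)
      rintro A ⟨k, rfl, hne⟩
      refine ⟨k, ?_, rfl⟩
      simp only [Set.mem_Iio]
      by_contra h
      push_neg at h
      exact hne (subset_antisymm ((hanti N k h).trans hNtr) (htriv k))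
    haveI : IsStrictOrder (Set M) (fun A B => A ⊂ B) :=
      inferInstanceAs (IsStrictOrder (Set M) (· < ·))
    exact hfin.wellFoundedOn

theorem stmt_17 (sat : M → Sen → Prop) (κ : Sen → Sen)
    (hanti : ∀ φ : Sen, ModS sat {κ φ} ⊆ ModS sat {φ})
    (hvac : ∀ φ : Sen, ModS sat {φ} ≠ TrivS sat →
      ∃ k : ℕ, ModS sat {κ^[k] φ} = TrivS sat)
    (T : Set Sen) (hT : T.Finite) (τ : Sen) (hτ : ModS sat {τ} = ModS sat T)
    (φ : Sen) (hφ : ModS sat (T ∪ {φ}) ≠ TrivS sat)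
    (conj : Sen → Sen → Sen)
    (hconj : ∀ a b : Sen, ModS sat {conj a b} = ModS sat {a} ∩ ModS sat {b}) :
    IsCutting sat T φ
        {X | ∃ k : ℕ, X = ModS sat {conj (κ^[k] τ) φ} ∧ X ≠ TrivS sat} ∧
      IsCutting sat T φ
        {X | ∃ k : ℕ, X = ModS sat {κ^[k] (conj τ φ)} ∧ X ≠ TrivS sat} := by
  have hunion : ModS sat (T ∪ {φ}) = ModS sat {τ} ∩ ModS sat {φ} := by
    rw [modS_union, hτ]
  have hτne : ModS sat {τ} ≠ TrivS sat := by
    intro h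
    apply hφ
    apply subset_antisymm
    · rw [hunion, h]; exact Set.inter_subset_left
    · exact triv_sub _ _
  have hconjne : ModS sat {conj τ φ} ≠ TrivS sat := by
    rw [hconj, ← hunion]; exact hφ
  constructor
  · apply cutting_gen sat T φ hφ (fun k => ModS sat {conj (κ^[k] τ) φ})
    · intro k
      rw [hconj, hconj, Function.iterate_succ_apply']
      exact Set.inter_subset_inter_left _ (hanti _)
    · rw [Function.iterate_zero_apply, hconj, hunion]
    · intro k; exact triv_sub _ _
    · obtain ⟨N, hNe⟩ := hvac τ hτne
      exact ⟨N, by rw [hconj, hNe]; exact Set.inter_subset_left⟩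
  · apply cutting_gen sat T φ hφ (fun k => ModS sat {κ^[k] (conj τ φ)})
    · intro k
      rw [Function.iterate_succ_apply']
      exact hanti _
    · rw [Function.iterate_zero_apply, hconj, hunion]
    · intro k; exact triv_sub _ _
    · obtain ⟨N, hNe⟩ := hvac (conj τ φ) hconjne
      exact ⟨N, hNe.subset⟩
end

section
/- Let C_φ be a cutting for a knowledge base T and a sentence φ that is totally ordered by inclusion (as are the cuttings C_lcr and C_lnr derived from a retraction). Then the derived relation ⪯_{C_φ} on Mod is a total pre-order: it is reflexive, transitive, and any two models are comparable. -/
variable {Sen M : Type*}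

theorem stmt_18 (sat : M → Sen → Prop) (T : Set Sen) (hT : T.Finite)
    (φ : Sen) (Cφ : Set (Set M)) (hC : IsCutting sat T φ Cφ)
    (hchain : IsChain (· ⊆ ·) Cφ) :
    Reflexive (CutPre Cφ) ∧ Transitive (CutPre Cφ) ∧
      ∀ m m' : M, CutPre Cφ m m' ∨ CutPre Cφ m' m := by
  have hmax : IsMaxChainIn Cφ Cφ :=
    ⟨subset_rfl, hchain, fun c' hc' _ hcc' => subset_antisymm hc' hcc'⟩
  have huniq : ∀ c, IsMaxChainIn Cφ c → c = Cφ := fun c hc =>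
    (hc.2.2 Cφ subset_rfl hchain hc.1).symm
  refine ⟨fun m => ⟨Cφ, hmax, fun _ _ h => h⟩, ?_, ?_⟩
  · rintro a b c ⟨c1, hc1, h1⟩ ⟨c2, hc2, h2⟩
    rw [huniq c1 hc1] at h1
    rw [huniq c2 hc2] at h2
    exact ⟨Cφ, hmax, fun A hA h => h1 A hA (h2 A hA h)⟩
  · intro m m'
    by_contra h
    push_neg at h
    obtain ⟨h1, h2⟩ := h
    have g1 : ¬ ∀ A ∈ Cφ, m' ∈ A → m ∈ A := fun g => h1 ⟨Cφ, hmax, g⟩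
    have g2 : ¬ ∀ A ∈ Cφ, m ∈ A → m' ∈ A := fun g => h2 ⟨Cφ, hmax, g⟩
    push_neg at g1 g2
    obtain ⟨A, hA, hm'A, hmA⟩ := g1
    obtain ⟨B, hB, hmB, hm'B⟩ := g2
    rcases hchain.total hA hB with hab | hba
    · exact hm'B (hab hm'A)
    · exact hmA (hba hmB)
end

section
/- Let n be a natural number and let V = (Fin n → Bool) be the set of propositional valuations over n variables. For X ⊆ V define the morphological erosion by the Hamming ball of radius 1: ε(X) = {ν ∈ V | ∀ν' ∈ V, hammingDist(ν, ν') ≤ 1 → ν' ∈ X}. Then ε is a retraction: (i) ε(X) ⊆ X for every X ⊆ V (anti-extensivity), and (ii) for every X ≠ V there exists k ∈ ℕ such that the k-fold iterate ε^k(X) = ∅ (vacuum). -/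
/-- Morphological erosion of a set of propositional valuations by the Hamming ball of radius 1. -/
def eros (n : ℕ) (X : Set (Fin n → Bool)) : Set (Fin n → Bool) :=
  {ν | ∀ ν' : Fin n → Bool, hammingDist ν ν' ≤ 1 → ν' ∈ X}

lemma eros_key (n : ℕ) (X : Set (Fin n → Bool)) (ν : Fin n → Bool) (hν : ν ∉ X) :
    ∀ k : ℕ, ∀ μ : Fin n → Bool, hammingDist μ ν ≤ k → μ ∉ (eros n)^[k] X := by
  intro k
  induction k with
  | zero =>
    intro μ h
    have : μ = ν := by
      rwa [Nat.le_zero, hammingDist_eq_zero] at h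
    simpa [this] using hν
  | succ k ih =>
    intro μ h hmem
    rw [Function.iterate_succ_apply'] at hmem
    by_cases hd : hammingDist μ ν ≤ k
    · exact ih μ hd (hmem μ (by simp))
    · -- distance is exactly k+1 > 0; flip a differing coordinate
      have hpos : 0 < hammingDist μ ν := by omega
      have hne : μ ≠ ν := by
        intro he; rw [he, hammingDist_self] at hpos; omega
      obtain ⟨i, hi⟩ := Function.ne_iff.mp hne
      set μ' := Function.update μ i (ν i) with hμ'
      have hdist1 : hammingDist μ μ' ≤ 1 := by
        have : ∀ j, j ≠ i → μ j = μ' j := by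
          intro j hj; simp [hμ', Function.update_of_ne hj]
        calc hammingDist μ μ' ≤ (Finset.filter (fun j => ¬ μ j = μ' j) Finset.univ).card := le_of_eq rfl
          _ ≤ ({i} : Finset (Fin n)).card := by
              apply Finset.card_le_card
              intro j hj
              simp only [Finset.mem_filter] at hj
              simp only [Finset.mem_singleton]
              by_contra hji
              exact hj.2 (this j hji)
          _ = 1 := Finset.card_singleton i
      have hdist2 : hammingDist μ' ν ≤ k := by
        have hlt : hammingDist μ' ν < hammingDist μ ν := by
          unfold hammingDist
          apply Finset.card_lt_card
          constructor
          · intro j hj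
            simp only [Finset.mem_filter, Finset.mem_univ, true_and] at hj ⊢
            by_cases hji : j = i
            · subst hji; simp [hμ'] at hj
            · rwa [hμ', Function.update_of_ne hji] at hj
          · intro hsub
            have := hsub (by simp [Finset.mem_filter, hi] : i ∈ Finset.filter (fun j => μ j ≠ ν j) Finset.univ)
            simp [Finset.mem_filter, hμ'] at this
        omega
      exact ih μ' hdist2 (hmem μ' hdist1)

theorem stmt_19 (n : ℕ) :
    (∀ X : Set (Fin n → Bool), eros n X ⊆ X) ∧
      (∀ X : Set (Fin n → Bool), X ≠ Set.univ → ∃ k : ℕ, (eros n)^[k] X = ∅) := by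
  constructor
  · intro X ν hν
    exact hν ν (by simp)
  · intro X hX
    obtain ⟨ν, hν⟩ : ∃ ν, ν ∉ X := by
      by_contra h
      push_neg at h
      exact hX (Set.eq_univ_of_forall h)
    refine ⟨n, Set.eq_empty_iff_forall_notMem.mpr fun μ => ?_⟩
    exact eros_key n X ν hν n μ (hammingDist_le_card_fintype.trans (by simp))
end
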